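/- Let R be a commutative ring, n an integer, and let h, t, s, u ∈ R satisfy: t² = 2h - s + (2n-2)·1, s² = 2h - u + (2n-2)·1, t·h = 2n·h, s·h = 2n·h, and h² = (2n²+1)·h. Then t⁴ = (8n² - 2)h + (4n² - 6n + 2)·1 - u - (4n - 4)s. -/
import Mathlib

theorem group_ring_fourth_power (R : Type*) [CommRing R] (n : ℤ) (h t s u : R)
    (h1 : t ^ 2 = 2 * h - s + (2 * (n : R) - 2) * 1)
    (h2 : s ^ 2 = 2 * h - u + (2 * (n : R) - 2) * 1)
    (h3 : t * h = 2 * (n : R) * h)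
    (h4 : s * h = 2 * (n : R) * h)
    (h5 : h ^ 2 = (2 * (n : R) ^ 2 + 1) * h) :
    t ^ 4 = (8 * (n : R) ^ 2 - 2) * h + (4 * (n : R) ^ 2 - 6 * (n : R) + 2) * 1
      - u - (4 * (n : R) - 4) * s := by
  linear_combination (t ^ 2 + 2 * h - s + (2 * (n : R) - 2)) * h1 + h2 + 4 * h5
    - 4 * h4
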